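/- Let S be a valid solution of an Evolomino instance and let A = a₁,…,a_L be one of its arrows such that every white cell of the board orthogonally adjacent to an interior arrow cell a_i (1 < i < L) and distinct from a_{i−1} and a_{i+1} is shaded. Suppose moreover that V ⊆ S, where V is a vertical segment of length s ≥ 2 with a_L ∈ V, the only cell of V lying on any arrow is a_L, and every white cell of the board orthogonally adjacent to V and not in V lies on the arrow A. Then the block of S containing a_L is exactly V, exactly two blocks of S meet A, and the first block B₁ (in arrow order) is a vertical segment of length s − 1 containing exactly one cell of A. -/

import Mathlib

open Pointwise

/-- A cell of the (infinite) grid. -/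
abbrev Cell : Type := ℤ × ℤ

/-- Orthogonal adjacency: the two cells differ by exactly 1 in exactly one coordinate. -/
def Adj (c d : Cell) : Prop :=
  (c.1 = d.1 ∧ (c.2 - d.2 = 1 ∨ d.2 - c.2 = 1)) ∨
  (c.2 = d.2 ∧ (c.1 - d.1 = 1 ∨ d.1 - c.1 = 1))

/-- The `p × q` board `{1,…,p} × {1,…,q} ⊆ ℤ × ℤ`. -/
def board (p q : ℕ) : Set Cell :=
  {c | 1 ≤ c.1 ∧ c.1 ≤ (p : ℤ) ∧ 1 ≤ c.2 ∧ c.2 ≤ (q : ℤ)}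

/-- The data of an Evolomino instance. -/
structure EvoInstance where
  p : ℕ
  q : ℕ
  shaded : Set Cell
  presq : Finset Cell
  arrows : List (List Cell)

/-- A cell is white if it lies on the board and is not shaded. -/
def EvoInstance.White (I : EvoInstance) (c : Cell) : Prop :=
  c ∈ board I.p I.q ∧ c ∉ I.shaded

/-- A legal arrow: a duplicate-free list of at least two white cells in which
consecutive cells are orthogonally adjacent. -/
def IsArrow (I : EvoInstance) (A : List Cell) : Prop :=
  A.Nodup ∧ 2 ≤ A.length ∧ (∀ c ∈ A, I.White c) ∧ A.Chain' Adj

/-- Well-formedness of an Evolomino instance: positive dimensions, shaded cells on the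
board, pre-drawn squares white, every arrow legal, and no cell on two arrows. -/
def EvoInstance.WellFormed (I : EvoInstance) : Prop :=
  0 < I.p ∧ 0 < I.q ∧ I.shaded ⊆ board I.p I.q ∧
  (∀ c ∈ I.presq, I.White c) ∧
  (∀ A ∈ I.arrows, IsArrow I A) ∧
  I.arrows.Pairwise (fun A B => ∀ c ∈ A, c ∉ B)

/-- A solution: a set of white cells containing the pre-drawn squares. -/
def IsSolution (I : EvoInstance) (S : Set Cell) : Prop :=
  (∀ c ∈ S, I.White c) ∧ ↑I.presq ⊆ S

/-- Connectivity inside `S` via orthogonal adjacency. -/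
def ConnIn (S : Set Cell) : Cell → Cell → Prop :=
  Relation.ReflTransGen (fun x y => x ∈ S ∧ y ∈ S ∧ Adj x y)

/-- `B` is a block of `S`: a connected component of `S` under orthogonal adjacency. -/
def IsBlock (S : Set Cell) (B : Set Cell) : Prop :=
  ∃ c ∈ S, B = {d | d ∈ S ∧ ConnIn S c d}

/-- The cell `c` lies on some arrow of the instance. -/
def OnArrow (I : EvoInstance) (c : Cell) : Prop :=
  ∃ A ∈ I.arrows, c ∈ A

/-- The set `B` meets the arrow `A`. -/
def Meets (B : Set Cell) (A : List Cell) : Prop :=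
  ∃ c ∈ B, c ∈ A

/-- The first position along the arrow `A` at which a cell of `B` occurs. -/
noncomputable def firstHit (A : List Cell) (B : Set Cell) : ℕ :=
  sInf {i | ∃ h : i < A.length, A.get ⟨i, h⟩ ∈ B}

/-- `B` and `B'` are consecutive blocks of `S` (in arrow order) meeting the arrow `A`. -/
def Consecutive (S : Set Cell) (A : List Cell) (B B' : Set Cell) : Prop :=
  IsBlock S B ∧ IsBlock S B' ∧ Meets B A ∧ Meets B' A ∧
  firstHit A B < firstHit A B' ∧
  ∀ B'', IsBlock S B'' → Meets B'' A →
    firstHit A B'' ≤ firstHit A B ∨ firstHit A B' ≤ firstHit A B''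

/-- A valid solution of an Evolomino instance. -/
def IsValidSolution (I : EvoInstance) (S : Set Cell) : Prop :=
  IsSolution I S ∧
  (∀ B, IsBlock S B → ∃! c, c ∈ B ∧ OnArrow I c) ∧
  (∀ A ∈ I.arrows, ∃ B B', IsBlock S B ∧ IsBlock S B' ∧ B ≠ B' ∧
    Meets B A ∧ Meets B' A) ∧
  (∀ A ∈ I.arrows, ∀ B B', Consecutive S A B B' →
    B'.ncard = B.ncard + 1 ∧ ∃ v : Cell, v +ᵥ B ⊆ B')

/-- The arrow `A` is fenced: every board cell orthogonally adjacent to an interior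
arrow cell `a_i` (`1 < i < L`) and distinct from `a_{i-1}` and `a_{i+1}` is shaded. -/
def Fenced (I : EvoInstance) (A : List Cell) : Prop :=
  ∀ i : ℕ, ∀ _h1 : 0 < i, ∀ h2 : i + 1 < A.length,
    ∀ c ∈ board I.p I.q,
      Adj c (A.get ⟨i, by omega⟩) →
      c ≠ A.get ⟨i - 1, by omega⟩ →
      c ≠ A.get ⟨i + 1, h2⟩ →
      c ∈ I.shaded

/-- A vertical segment of length `ℓ`: the cells `(x, y)` with `y₀ ≤ y < y₀ + ℓ`. -/
def IsVertSeg (B : Set Cell) (ℓ : ℕ) : Prop :=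
  ∃ x y₀ : ℤ, B = {c : Cell | c.1 = x ∧ y₀ ≤ c.2 ∧ c.2 < y₀ + ℓ}

/-- A horizontal segment of length `ℓ`: the cells `(x, y)` with `x₀ ≤ x < x₀ + ℓ`. -/
def IsHorizSeg (B : Set Cell) (ℓ : ℕ) : Prop :=
  ∃ x₀ y : ℤ, B = {c : Cell | c.2 = y ∧ x₀ ≤ c.1 ∧ c.1 < x₀ + ℓ}


section EvoAux

lemma adj_symm {c d : Cell} (h : Adj c d) : Adj d c := by
  unfold Adj at *; omega

lemma connIn_symm {S : Set Cell} {c d : Cell} (h : ConnIn S c d) : ConnIn S d c :=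
  (@Relation.ReflTransGen.stdSymm _ _ ⟨fun _ _ ⟨hx, hy, ha⟩ => ⟨hy, hx, adj_symm ha⟩⟩).symm _ _ h

lemma block_subset {S B : Set Cell} (hB : IsBlock S B) : B ⊆ S := by
  obtain ⟨c₀, _, rfl⟩ := hB; exact fun d hd => hd.1

lemma block_eq_component {S B : Set Cell} (hB : IsBlock S B) {c : Cell} (hc : c ∈ B) :
    B = {d | d ∈ S ∧ ConnIn S c d} := by
  obtain ⟨c₀, hc₀S, rfl⟩ := hB
  obtain ⟨hcS, hcc⟩ := hc
  ext d
  constructor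
  · rintro ⟨hdS, hd⟩; exact ⟨hdS, (connIn_symm hcc).trans hd⟩
  · rintro ⟨hdS, hd⟩; exact ⟨hdS, hcc.trans hd⟩

lemma blocks_eq {S B B' : Set Cell} (hB : IsBlock S B) (hB' : IsBlock S B')
    {c : Cell} (hc : c ∈ B) (hc' : c ∈ B') : B = B' := by
  rw [block_eq_component hB hc, block_eq_component hB' hc']

lemma block_closed {S B : Set Cell} (hB : IsBlock S B) {c d : Cell}
    (hc : c ∈ B) (hdS : d ∈ S) (hadj : Adj c d) : d ∈ B := by
  rw [block_eq_component hB hc]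
  exact ⟨hdS, Relation.ReflTransGen.single ⟨block_subset hB hc, hdS, hadj⟩⟩

lemma block_conn_within {S B : Set Cell} (hB : IsBlock S B) {c d : Cell}
    (hc : c ∈ B) (hd : d ∈ B) :
    Relation.ReflTransGen (fun u v => u ∈ B ∧ v ∈ B ∧ Adj u v) c d := by
  obtain ⟨c₀, hc₀S, hcomp⟩ := hB
  have hmem : ∀ e, e ∈ S → ConnIn S c₀ e → e ∈ B := fun e he hce => by
    rw [hcomp]; exact ⟨he, hce⟩
  have key : ∀ e, ConnIn S c₀ e →
      Relation.ReflTransGen (fun u v => u ∈ B ∧ v ∈ B ∧ Adj u v) c₀ e := by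
    intro e he
    induction he with
    | refl => exact .refl
    | tail hp hstep ih =>
      exact ih.tail ⟨hmem _ hstep.1 hp, hmem _ hstep.2.1 (hp.tail hstep), hstep.2.2⟩
  have hsymm : Symmetric (fun u v : Cell => u ∈ B ∧ v ∈ B ∧ Adj u v) :=
    fun u v ⟨h1, h2, h3⟩ => ⟨h2, h1, adj_symm h3⟩
  have hcc : ConnIn S c₀ c := by rw [hcomp] at hc; exact hc.2
  have hcd : ConnIn S c₀ d := by rw [hcomp] at hd; exact hd.2
  exact ((@Relation.ReflTransGen.stdSymm _ _ ⟨fun _ _ h => hsymm h⟩).symm _ _ (key c hcc)).trans (key d hcd)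

lemma connIn_col_up (S : Set Cell) (x : ℤ) :
    ∀ n : ℕ, ∀ y : ℤ, (∀ w : ℤ, y ≤ w → w ≤ y + n → (x, w) ∈ S) →
      ConnIn S (x, y) (x, y + n) := by
  intro n
  induction n with
  | zero => intro y _; simp only [Nat.cast_zero, add_zero]; exact Relation.ReflTransGen.refl
  | succ n ih =>
    intro y h
    have h1 := ih y (fun w hw1 hw2 => h w hw1 (by push_cast; omega))
    have hstep : ConnIn S (x, y) (x, (y + n) + 1) := by
      refine h1.tail ⟨h _ (by omega) (by push_cast; omega),
        h _ (by omega) (by push_cast; omega), ?_⟩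
      exact Or.inl ⟨rfl, Or.inr (by ring)⟩
    have hn1 : ((n + 1 : ℕ) : ℤ) = (n : ℤ) + 1 := by push_cast; ring
    rw [hn1, ← add_assoc]
    exact hstep

lemma connIn_col (S : Set Cell) (x y z : ℤ)
    (h : ∀ w : ℤ, min y z ≤ w → w ≤ max y z → (x, w) ∈ S) :
    ConnIn S (x, y) (x, z) := by
  rcases le_total y z with hyz | hzy
  · obtain ⟨n, hn⟩ : ∃ n : ℕ, z = y + n := ⟨(z - y).toNat, by omega⟩
    rw [hn]
    exact connIn_col_up S x n y (fun w h1 h2 => h w (by omega) (by omega))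
  · obtain ⟨n, hn⟩ : ∃ n : ℕ, y = z + n := ⟨(y - z).toNat, by omega⟩
    rw [hn]
    exact connIn_symm (connIn_col_up S x n z (fun w h1 h2 => h w (by omega) (by omega)))

lemma walk_ivt {B : Set Cell} {x : ℤ} (hcol : ∀ c ∈ B, c.1 = x) {u v : Cell}
    (hp : Relation.ReflTransGen (fun a b => a ∈ B ∧ b ∈ B ∧ Adj a b) u v)
    (hu : u ∈ B) : ∀ m : ℤ, u.2 ≤ m → m ≤ v.2 → (x, m) ∈ B := by
  induction hp with
  | refl =>
    intro m h1 h2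
    have hm : m = u.2 := le_antisymm h2 h1
    have : u = (x, m) := Prod.ext (hcol u hu) hm.symm
    rwa [← this]
  | @tail w v hp hstep ih =>
    intro m h1 h2
    obtain ⟨hwB, hvB, hadj⟩ := hstep
    by_cases hm : m ≤ w.2
    · exact ih m h1 hm
    · push_neg at hm
      have hw1 := hcol _ hwB
      have hv1 := hcol _ hvB
      rcases hadj with ⟨h1', h2'⟩ | ⟨h1', h2'⟩
      · have hmv : m = v.2 := by omega
        have hveq : v = (x, m) := Prod.ext hv1 hmv.symm
        rwa [← hveq]
      · omega

lemma exists_exit {S V : Set Cell} {c : Cell} (hc : c ∈ V) :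
    ∀ d, ConnIn S c d → d ∉ V →
      ∃ e, e ∉ V ∧ e ∈ S ∧ ConnIn S c e ∧ ∃ f ∈ V, Adj f e := by
  intro d hpath
  induction hpath with
  | refl => intro hd; exact absurd hc hd
  | @tail w d' hp hstep ih =>
    intro hd
    by_cases hw : w ∈ V
    · exact ⟨d', hd, hstep.2.1, hp.tail hstep, w, hw, hstep.2.2⟩
    · exact ih hw

lemma board_finite (p q : ℕ) : (board p q).Finite := by
  apply Set.Finite.subset (Set.finite_Icc ((1 : ℤ), (1 : ℤ)) ((p : ℤ), (q : ℤ)))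
  rintro ⟨a, b⟩ ⟨h1, h2, h3, h4⟩
  simp only [Set.mem_Icc, Prod.mk_le_mk, Prod.le_def]
  exact ⟨⟨h1, h3⟩, h2, h4⟩

lemma vertseg_ncard {B : Set Cell} {ℓ : ℕ} (h : IsVertSeg B ℓ) : B.ncard = ℓ := by
  obtain ⟨x, y₀, rfl⟩ := h
  have himg : {c : Cell | c.1 = x ∧ y₀ ≤ c.2 ∧ c.2 < y₀ + ℓ} =
      (fun y => ((x, y) : Cell)) '' (Set.Ico y₀ (y₀ + ℓ)) := by
    ext ⟨a, b⟩
    constructor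
    · rintro ⟨rfl, h1, h2⟩; exact ⟨b, ⟨h1, h2⟩, rfl⟩
    · rintro ⟨y, ⟨h1, h2⟩, heq⟩
      obtain ⟨rfl, rfl⟩ := Prod.mk.injEq .. ▸ heq
      exact ⟨rfl, h1, h2⟩
  rw [himg, Set.ncard_image_of_injective _ (fun a b hab => by simpa using hab)]
  rw [← Finset.coe_Ico, Set.ncard_coe_finset, Int.card_Ico]
  omega

lemma firstHit_eq {A : List Cell} {B : Set Cell} {j : ℕ}
    (hj : j ∈ {i | ∃ h : i < A.length, A.get ⟨i, h⟩ ∈ B})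
    (hmin : ∀ i ∈ {i | ∃ h : i < A.length, A.get ⟨i, h⟩ ∈ B}, j ≤ i) :
    firstHit A B = j :=
  le_antisymm (Nat.sInf_le hj) (hmin _ (Nat.sInf_mem ⟨j, hj⟩))

lemma nodup_get_inj {l : List Cell} (h : l.Nodup) {i j : ℕ}
    (hi : i < l.length) (hj : j < l.length)
    (e : l.get ⟨i, hi⟩ = l.get ⟨j, hj⟩) : i = j := by
  have := h.get_inj_iff.mp e
  exact Fin.mk.inj_iff.mp this

end EvoAux

/-- If a fenced arrow `A` of a valid solution `S` ends at `a_L`, and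
`V ⊆ S` is a vertical segment of length `s ≥ 2` containing `a_L`, whose only cell on
any arrow is `a_L`, and all of whose white neighbours outside `V` lie on `A`, then the
block of `S` containing `a_L` is exactly `V`, exactly two blocks of `S` meet `A`, and
the first of them (in arrow order) is a vertical segment of length `s - 1` containing
exactly one cell of `A`. -/
theorem evolomino_fenced_arrow_vertical_end
    (I : EvoInstance) (hWF : I.WellFormed)
    (S : Set Cell) (hS : IsValidSolution I S)
    (A : List Cell) (hA : A ∈ I.arrows) (hAne : A ≠ [])
    (hfence : Fenced I A)
    (V : Set Cell) (s : ℕ) (hs : 2 ≤ s) (hVseg : IsVertSeg V s)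
    (hVS : V ⊆ S) (haL : A.getLast hAne ∈ V)
    (honly : ∀ c ∈ V, OnArrow I c → c = A.getLast hAne)
    (hnbr : ∀ c : Cell, I.White c → (∃ d ∈ V, Adj c d) → c ∉ V → c ∈ A) :
    (∀ B, IsBlock S B → A.getLast hAne ∈ B → B = V) ∧
    ∃ B₁ B₂ : Set Cell,
      IsBlock S B₁ ∧ IsBlock S B₂ ∧ B₁ ≠ B₂ ∧ Meets B₁ A ∧ Meets B₂ A ∧
      (∀ B, IsBlock S B → Meets B A → B = B₁ ∨ B = B₂) ∧
      firstHit A B₁ < firstHit A B₂ ∧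
      IsVertSeg B₁ (s - 1) ∧
      (∃! c, c ∈ B₁ ∧ c ∈ A) := by

  obtain ⟨hSol, hUniq, hTwo, hCons⟩ := hS
  have hwhite := hSol.1
  have hSfin : S.Finite := (board_finite I.p I.q).subset (fun c hc => (hwhite c hc).1)
  obtain ⟨hnodup, hlen, hwhiteA, hchain⟩ := hWF.2.2.2.2.1 A hA
  have hL1 : A.length - 1 < A.length := by omega
  have hlast : A.getLast hAne = A.get ⟨A.length - 1, hL1⟩ := by rw [List.getLast_eq_getElem]; rfl
  have hadj_chain : ∀ i (h : i + 1 < A.length),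
      Adj (A.get ⟨i, by omega⟩) (A.get ⟨i + 1, h⟩) := by
    intro i h
    exact List.isChain_iff_getElem.mp hchain i (by omega)
  obtain ⟨x, y₀, hVeq⟩ := hVseg
  have haLx : (A.getLast hAne).1 = x ∧ y₀ ≤ (A.getLast hAne).2 ∧
      (A.getLast hAne).2 < y₀ + s := by rw [hVeq] at haL; exact haL
  have haLS : A.getLast hAne ∈ S := hVS haL
  -- every cell of V is connected to aL inside S
  have hVconnS : ∀ c ∈ V, ConnIn S (A.getLast hAne) c := by
    intro c hc
    have hc' : c.1 = x ∧ y₀ ≤ c.2 ∧ c.2 < y₀ + s := by rw [hVeq] at hc; exact hc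
    have e1 : A.getLast hAne = ((x, (A.getLast hAne).2) : Cell) :=
      Prod.ext haLx.1 rfl
    have e2 : c = ((x, c.2) : Cell) := Prod.ext hc'.1 rfl
    rw [e1, e2]
    apply connIn_col
    intro w hw1 hw2
    apply hVS
    rw [hVeq]
    refine ⟨rfl, ?_, ?_⟩ <;> simp only [] <;> omega
  -- Part 1: any block containing aL equals V
  have part1 : ∀ B, IsBlock S B → A.getLast hAne ∈ B → B = V := by
    intro B hB haLB
    have hcomp := block_eq_component hB haLB
    apply Set.Subset.antisymm
    · intro d hdB
      by_contra hdV
      have hdconn : ConnIn S (A.getLast hAne) d := by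
        rw [hcomp] at hdB; exact hdB.2
      obtain ⟨e, heV, heS, heconn, f, hfV, hfe⟩ := exists_exit haL d hdconn hdV
      have heA : e ∈ A := hnbr e (hwhite e heS) ⟨f, hfV, adj_symm hfe⟩ heV
      have heB : e ∈ B := by rw [hcomp]; exact ⟨heS, heconn⟩
      obtain ⟨u, hu, huni⟩ := hUniq B hB
      have h1 : e = u := huni e ⟨heB, A, hA, heA⟩
      have h2 : A.getLast hAne = u := huni _ ⟨haLB, A, hA, List.getLast_mem hAne⟩
      rw [h2.symm] at h1
      exact heV (h1 ▸ haL)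
    · intro c hc
      rw [hcomp]
      exact ⟨hVS hc, hVconnS c hc⟩
  -- V is a block
  have hVblock : IsBlock S V := by
    have hB : IsBlock S {d | d ∈ S ∧ ConnIn S (A.getLast hAne) d} := ⟨_, haLS, rfl⟩
    have := part1 _ hB ⟨haLS, .refl⟩
    rw [← this]
    exact hB
  -- the second-to-last arrow cell is not in S
  have haprevS : ∀ (h : A.length - 2 < A.length), A.get ⟨A.length - 2, h⟩ ∉ S := by
    intro h hmem
    have hidx : A.length - 2 + 1 = A.length - 1 := by omega
    have hadj : Adj (A.get ⟨A.length - 2, h⟩) (A.get ⟨A.length - 1, hL1⟩) := by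
      have h' := hadj_chain (A.length - 2) (by omega)
      have : (⟨A.length - 2 + 1, by omega⟩ : Fin A.length) = ⟨A.length - 1, hL1⟩ :=
        Fin.ext hidx
      rwa [this] at h'
    have hinV : A.get ⟨A.length - 2, h⟩ ∈ V := by
      apply block_closed hVblock haL hmem
      rw [hlast]
      exact adj_symm hadj
    have := honly _ hinV ⟨A, hA, A.get_mem _⟩
    rw [hlast] at this
    have := nodup_get_inj hnodup _ _ this
    omega
  -- the least arrow index hitting S
  have hJne : (A.length - 1) ∈ {i | ∃ h : i < A.length, A.get ⟨i, h⟩ ∈ S} :=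
    ⟨hL1, by rw [← hlast]; exact haLS⟩
  set i₀ := sInf {i | ∃ h : i < A.length, A.get ⟨i, h⟩ ∈ S} with hi₀def
  have hi₀mem := Nat.sInf_mem ⟨_, hJne⟩
  obtain ⟨hi₀L, hai₀S⟩ := hi₀mem
  -- i₀ < L - 1
  have hi₀lt : i₀ < A.length - 1 := by
    obtain ⟨D, D', hDb, hD'b, hDD', hDm, hD'm⟩ := hTwo A hA
    have key : ∀ E, IsBlock S E → Meets E A → E ≠ V → ∃ i, ∃ h : i < A.length,
        A.get ⟨i, h⟩ ∈ S ∧ i < A.length - 1 := by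
      intro E hEb hEm hEV
      obtain ⟨c, hcE, hcA⟩ := hEm
      obtain ⟨⟨i, hiL⟩, hceq⟩ := List.mem_iff_get.mp hcA
      have hcS : c ∈ S := block_subset hEb hcE
      have h1 : i ≠ A.length - 1 := by
        intro hieq
        apply hEV
        apply part1 E hEb
        rw [hlast]
        have : (⟨i, hiL⟩ : Fin A.length) = ⟨A.length - 1, hL1⟩ := Fin.ext hieq
        rw [← this, hceq]
        exact hcE
      have h2 : i ≠ A.length - 2 := by
        intro hieq
        apply haprevS (by omega)
        have : (⟨A.length - 2, by omega⟩ : Fin A.length) = ⟨i, hiL⟩ :=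
          Fin.ext hieq.symm
        rw [this, hceq]
        exact hcS
      exact ⟨i, hiL, hceq ▸ hcS, by omega⟩
    by_cases hDV : D = V
    · obtain ⟨i, hi, hiS, hilt⟩ := key D' hD'b hD'm (fun h => hDD' (hDV.trans h.symm))
      exact lt_of_le_of_lt (Nat.sInf_le ⟨hi, hiS⟩) hilt
    · obtain ⟨i, hi, hiS, hilt⟩ := key D hDb hDm hDV
      exact lt_of_le_of_lt (Nat.sInf_le ⟨hi, hiS⟩) hilt
  -- the first block B₁
  set a₀ : Cell := A.get ⟨i₀, hi₀L⟩ with ha₀def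
  set B₁ : Set Cell := {d | d ∈ S ∧ ConnIn S a₀ d} with hB₁def
  have hB₁b : IsBlock S B₁ := ⟨a₀, hai₀S, rfl⟩
  have ha₀B₁ : a₀ ∈ B₁ := ⟨hai₀S, .refl⟩
  have ha₀A : a₀ ∈ A := A.get_mem _
  have hB₁V : B₁ ≠ V := by
    intro h
    have ha₀V : a₀ ∈ V := h ▸ ha₀B₁
    have := honly a₀ ha₀V ⟨A, hA, ha₀A⟩
    rw [hlast] at this
    have := nodup_get_inj hnodup _ _ this
    omega
  have haLnB₁ : A.getLast hAne ∉ B₁ := fun h =>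
    hB₁V (blocks_eq hB₁b hVblock h haL)
  -- least arrow index hitting S outside B₁
  have hKne : (A.length - 1) ∈
      {i | ∃ h : i < A.length, A.get ⟨i, h⟩ ∈ S ∧ A.get ⟨i, h⟩ ∉ B₁} :=
    ⟨hL1, by rw [← hlast]; exact ⟨haLS, haLnB₁⟩⟩
  set j₁ := sInf {i | ∃ h : i < A.length, A.get ⟨i, h⟩ ∈ S ∧ A.get ⟨i, h⟩ ∉ B₁}
    with hj₁def
  have hj₁mem := Nat.sInf_mem ⟨_, hKne⟩
  obtain ⟨hj₁L, haj₁S, haj₁nB₁⟩ := hj₁mem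
  set a₁ : Cell := A.get ⟨j₁, hj₁L⟩ with ha₁def
  set C : Set Cell := {d | d ∈ S ∧ ConnIn S a₁ d} with hCdef
  have hCb : IsBlock S C := ⟨a₁, haj₁S, rfl⟩
  have ha₁C : a₁ ∈ C := ⟨haj₁S, .refl⟩
  have ha₁A : a₁ ∈ A := A.get_mem _
  have hi₀j₁ : i₀ < j₁ := by
    have h1 : i₀ ≤ j₁ := Nat.sInf_le ⟨hj₁L, haj₁S⟩
    rcases h1.lt_or_eq with h | h
    · exact h
    · exfalso; apply haj₁nB₁
      have : (⟨j₁, hj₁L⟩ : Fin A.length) = ⟨i₀, hi₀L⟩ := Fin.ext h.symm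
      rw [ha₁def] at *
      rw [this]
      exact ha₀B₁
  -- firstHit computations
  have fh_B₁ : firstHit A B₁ = i₀ := by
    apply firstHit_eq ⟨hi₀L, ha₀B₁⟩
    rintro i ⟨hiL, hiB⟩
    exact Nat.sInf_le ⟨hiL, block_subset hB₁b hiB⟩
  have fh_C : firstHit A C = j₁ := by
    apply firstHit_eq ⟨hj₁L, ha₁C⟩
    rintro i ⟨hiL, hiC⟩
    refine Nat.sInf_le ⟨hiL, block_subset hCb hiC, ?_⟩
    intro hiB₁
    exact haj₁nB₁ ((blocks_eq hCb hB₁b hiC hiB₁) ▸ ha₁C)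
  have fh_V : firstHit A V = A.length - 1 := by
    apply firstHit_eq ⟨hL1, by rw [← hlast]; exact haL⟩
    rintro i ⟨hiL, hiV⟩
    have := honly _ hiV ⟨A, hA, A.get_mem _⟩
    rw [hlast] at this
    have := nodup_get_inj hnodup _ _ this
    omega
  -- B₁ and C are consecutive
  have hconsec : Consecutive S A B₁ C := by
    refine ⟨hB₁b, hCb, ⟨a₀, ha₀B₁, ha₀A⟩, ⟨a₁, ha₁C, ha₁A⟩, ?_, ?_⟩
    · rw [fh_B₁, fh_C]; exact hi₀j₁
    · intro B'' hB''b hB''m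
      obtain ⟨c, hcB'', hcA⟩ := hB''m
      have hne : {i | ∃ h : i < A.length, A.get ⟨i, h⟩ ∈ B''}.Nonempty := by
        obtain ⟨⟨i, hi⟩, hceq⟩ := List.mem_iff_get.mp hcA
        exact ⟨i, hi, hceq ▸ hcB''⟩
      obtain ⟨hfL, hfmem⟩ := Nat.sInf_mem hne
      by_cases hb : A.get ⟨firstHit A B'', hfL⟩ ∈ B₁
      · left
        rw [blocks_eq hB''b hB₁b hfmem hb]
      · right
        rw [fh_C]
        exact Nat.sInf_le ⟨hfL, block_subset hB''b hfmem, hb⟩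
  obtain ⟨hcard, v, hvsub⟩ := hCons A hA B₁ C hconsec
  have hB₁fin : B₁.Finite := hSfin.subset (block_subset hB₁b)
  have hB₁pos : 0 < B₁.ncard := (Set.ncard_pos hB₁fin).mpr ⟨a₀, ha₀B₁⟩
  -- C must be V
  have hCeqV : C = V := by
    by_contra hCV
    have hj₁ne1 : j₁ ≠ A.length - 1 := by
      intro h
      apply hCV
      apply part1 C hCb
      rw [hlast]
      have : (⟨A.length - 1, hL1⟩ : Fin A.length) = ⟨j₁, hj₁L⟩ := Fin.ext h.symm
      rw [this]
      exact ha₁C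
    have hj₁ne2 : j₁ ≠ A.length - 2 := by
      intro h
      apply haprevS (by omega)
      have : (⟨A.length - 2, by omega⟩ : Fin A.length) = ⟨j₁, hj₁L⟩ := Fin.ext h.symm
      rw [this]
      exact haj₁S
    have hj₁pos : 0 < j₁ := by omega
    have hj₁top : j₁ + 1 < A.length := by omega
    have hC2 : 1 < C.ncard := by omega
    obtain ⟨d, hdC, hdne⟩ := Set.exists_ne_of_one_lt_ncard hC2 a₁
    have hpath := block_conn_within hCb ha₁C hdC
    rcases hpath.cases_head with heq | ⟨w, ⟨_, hwC, hadjw⟩, _⟩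
    · exact hdne heq.symm
    · have hwS : w ∈ S := block_subset hCb hwC
      have hwwhite := hwhite w hwS
      have htwo : ∀ (k : ℕ) (hk : k < A.length), w = A.get ⟨k, hk⟩ → k ≠ j₁ → False := by
        intro k hk hw hkj
        obtain ⟨u, _, huni⟩ := hUniq C hCb
        have e1 : w = u := huni w ⟨hwC, A, hA, hw ▸ A.get_mem _⟩
        have e2 : a₁ = u := huni a₁ ⟨ha₁C, A, hA, ha₁A⟩
        have : A.get ⟨k, hk⟩ = A.get ⟨j₁, hj₁L⟩ := by
          rw [← hw, ha₁def] at *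
          rw [e1, ← e2]
        exact hkj (nodup_get_inj hnodup _ _ this)
      by_cases h1 : w = A.get ⟨j₁ - 1, by omega⟩
      · exact htwo (j₁ - 1) (by omega) h1 (by omega)
      · by_cases h2 : w = A.get ⟨j₁ + 1, hj₁top⟩
        · exact htwo (j₁ + 1) hj₁top h2 (by omega)
        · exact hwwhite.2 (hfence j₁ hj₁pos hj₁top w hwwhite.1 (adj_symm hadjw) h1 h2)
  rw [hCeqV] at hcard hvsub fh_C
  have hj₁eq : j₁ = A.length - 1 := by rw [fh_V] at fh_C; exact fh_C.symm
  -- cardinalities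
  have hVncard : V.ncard = s := vertseg_ncard ⟨x, y₀, hVeq⟩
  have hB₁card : B₁.ncard = s - 1 := by omega
  -- B₁ lies in a single column
  have hcol : ∀ c ∈ B₁, c.1 = x - v.1 ∧ y₀ - v.2 ≤ c.2 ∧ c.2 < y₀ - v.2 + s := by
    intro c hc
    have hmem : v +ᵥ c ∈ V := hvsub (Set.vadd_mem_vadd_set hc)
    rw [hVeq] at hmem
    obtain ⟨h1, h2, h3⟩ := hmem
    simp only [vadd_eq_add, Prod.fst_add, Prod.snd_add] at h1 h2 h3
    refine ⟨by omega, by omega, by omega⟩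
  have hcol1 : ∀ c ∈ B₁, c.1 = x - v.1 := fun c hc => (hcol c hc).1
  -- the set of second coordinates
  set Y : Finset ℤ := hB₁fin.toFinset.image Prod.snd with hYdef
  have hYmem : ∀ m : ℤ, m ∈ Y ↔ ((x - v.1, m) : Cell) ∈ B₁ := by
    intro m
    constructor
    · intro hm
      obtain ⟨c, hcF, hc2⟩ := Finset.mem_image.mp hm
      have hcB : c ∈ B₁ := (hB₁fin.mem_toFinset).mp hcF
      have hce : c = ((x - v.1, m) : Cell) := Prod.ext (hcol1 c hcB) hc2
      rwa [← hce]
    · intro hm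
      exact Finset.mem_image.mpr ⟨_, (hB₁fin.mem_toFinset).mpr hm, rfl⟩
  have hYcard : Y.card = s - 1 := by
    rw [hYdef, Finset.card_image_of_injOn, ← Set.ncard_eq_toFinset_card B₁ hB₁fin,
      hB₁card]
    intro c hc c' hc' h
    exact Prod.ext ((hcol1 c ((hB₁fin.mem_toFinset).mp hc)).trans
      (hcol1 c' ((hB₁fin.mem_toFinset).mp hc')).symm) h
  have hYne : Y.Nonempty := Finset.card_pos.mp (by omega)
  have hconv : ∀ m, Y.min' hYne ≤ m → m ≤ Y.max' hYne → m ∈ Y := by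
    intro m hm1 hm2
    have haB := (hYmem _).mp (Y.min'_mem hYne)
    have hbB := (hYmem _).mp (Y.max'_mem hYne)
    have hpath := block_conn_within hB₁b haB hbB
    exact (hYmem m).mpr (walk_ivt hcol1 hpath haB m hm1 hm2)
  have hYIcc : Y = Finset.Icc (Y.min' hYne) (Y.max' hYne) := by
    apply Finset.Subset.antisymm
    · intro m hm
      exact Finset.mem_Icc.mpr ⟨Y.min'_le m hm, Y.le_max' m hm⟩
    · intro m hm
      obtain ⟨h1, h2⟩ := Finset.mem_Icc.mp hm
      exact hconv m h1 h2
  have hminmax : Y.min' hYne ≤ Y.max' hYne := Y.min'_le _ (Y.max'_mem hYne)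
  have hab : Y.max' hYne = Y.min' hYne + (s - 1 : ℕ) - 1 := by
    have hc := hYcard
    rw [hYIcc, Int.card_Icc] at hc
    omega
  -- B₁ is a vertical segment
  have hseg : IsVertSeg B₁ (s - 1) := by
    refine ⟨x - v.1, Y.min' hYne, ?_⟩
    ext c
    constructor
    · intro hc
      have h1 := hcol1 c hc
      have h2 : c.2 ∈ Y := (hYmem c.2).mpr (by
        rwa [show ((x - v.1, c.2) : Cell) = c from Prod.ext h1.symm rfl])
      have h3 := Y.min'_le _ h2
      have h4 := Y.le_max' _ h2
      exact ⟨h1, h3, by omega⟩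
    · rintro ⟨h1, h2, h3⟩
      have hcY : c.2 ∈ Y := hconv c.2 h2 (by omega)
      have := (hYmem c.2).mp hcY
      rwa [show ((x - v.1, c.2) : Cell) = c from Prod.ext h1.symm rfl] at this
  -- only two blocks meet A
  have honly2 : ∀ B, IsBlock S B → Meets B A → B = B₁ ∨ B = V := by
    intro B hBb hBm
    obtain ⟨c, hcB, hcA⟩ := hBm
    obtain ⟨⟨i, hiL⟩, hceq⟩ := List.mem_iff_get.mp hcA
    by_cases hb : c ∈ B₁
    · left
      exact blocks_eq hBb hB₁b hcB hb
    · right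
      have hiK : j₁ ≤ i := Nat.sInf_le ⟨hiL, hceq ▸ block_subset hBb hcB, hceq ▸ hb⟩
      have hieq : i = A.length - 1 := by omega
      apply part1 B hBb
      rw [hlast]
      have : (⟨A.length - 1, hL1⟩ : Fin A.length) = ⟨i, hiL⟩ := Fin.ext hieq.symm
      rw [this, hceq]
      exact hcB
  -- uniqueness of the arrow cell of B₁
  have huniqB₁ : ∃! c, c ∈ B₁ ∧ c ∈ A := by
    refine ⟨a₀, ⟨ha₀B₁, ha₀A⟩, ?_⟩
    rintro c ⟨hcB, hcA⟩
    obtain ⟨u, _, huni⟩ := hUniq B₁ hB₁b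
    exact (huni c ⟨hcB, A, hA, hcA⟩).trans (huni a₀ ⟨ha₀B₁, A, hA, ha₀A⟩).symm
  refine ⟨part1, B₁, V, hB₁b, hVblock, hB₁V, ⟨a₀, ha₀B₁, ha₀A⟩,
    ⟨A.getLast hAne, haL, List.getLast_mem hAne⟩, honly2, ?_, hseg, huniqB₁⟩
  rw [fh_B₁, fh_V]
  exact hi₀lt
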